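/- Let f : (0,∞) → ℝ be non-decreasing and concave, p̂ ∈ Δ(V) with p̂_1 ≥ … ≥ p̂_d > 0, and p̂_d ≤ ε < p̂_1. Let î = max{i : p̂_i > ε}, assume g⁻(p̂_i) = f(p̂_i) − f(p̂_i − ε) > 0 for i ≤ î, set S_I = Σ_{i=1}^{I−1} (f(p̂_i) − f(p̂_I)) / g⁻(p̂_i), and let Î = max{I ≤ î : S_I ≤ 1}. Define q̃ with q̃_i proportional to 1/g⁻(p̂_i) for 1 ≤ i ≤ Î and q̃_i = 0 otherwise (normalized to sum to 1). Then q̃ solves the reduced regularized problem over the truncated support: for every q ∈ Δ(V) with q_i = 0 for all i > î, Σ_i q_i f(p̂_i) − max_{1 ≤ i ≤ î} q_i g⁻(p̂_i) ≤ Σ_i q̃_i f(p̂_i) − max_{1 ≤ i ≤ î} q̃_i g⁻(p̂_i). -/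

import Mathlib

open Finset

def simplex (d : ℕ) : Set (Fin d → ℝ) := {p | (∀ i, 0 ≤ p i) ∧ ∑ i, p i = 1}


lemma aux15 {d : ℕ} (F g : Fin d → ℝ) (ihat Ihat : Fin d)
    (hIhat_le : Ihat ≤ ihat)
    (hgpos : ∀ i : Fin d, i ≤ ihat → 0 < g i)
    (hFmono : ∀ i j : Fin d, i ≤ j → F j ≤ F i)
    (hScond : (∑ i ∈ univ.filter (· < Ihat), (F i - F Ihat) / g i) ≤ 1)
    (hSmax : ∀ I : Fin d, I ≤ ihat →
      (∑ i ∈ univ.filter (· < I), (F i - F I) / g i) ≤ 1 → I ≤ Ihat)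
    (qt : Fin d → ℝ)
    (hqt : ∀ i : Fin d, qt i = if i ≤ Ihat then
        (1 / g i) / (∑ k ∈ univ.filter (· ≤ Ihat), 1 / g k) else 0)
    (q : Fin d → ℝ) (hq0 : ∀ i, 0 ≤ q i) (hq1 : ∑ i, q i = 1)
    (hsupp : ∀ i : Fin d, ihat < i → q i = 0) :
    (∑ i, q i * F i) - sSup {x : ℝ | ∃ i : Fin d, i ≤ ihat ∧ x = q i * g i}
      ≤ (∑ i, qt i * F i) - sSup {x : ℝ | ∃ i : Fin d, i ≤ ihat ∧ x = qt i * g i} := by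
  set Z : ℝ := ∑ k ∈ univ.filter (· ≤ Ihat), 1 / g k with hZdef
  have hZpos : 0 < Z := by
    apply Finset.sum_pos
    · intro k hk
      exact one_div_pos.mpr (hgpos k (le_trans (by simpa using hk) hIhat_le))
    · exact ⟨Ihat, by simp⟩
  have hZne : Z ≠ 0 := ne_of_gt hZpos
  have hbdd : ∀ r : Fin d → ℝ, BddAbove {x : ℝ | ∃ i : Fin d, i ≤ ihat ∧ x = r i * g i} := by
    intro r
    apply Set.Finite.bddAbove
    apply Set.Finite.subset (Set.finite_range (fun i => r i * g i))
    rintro x ⟨i, _, rfl⟩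
    exact ⟨i, rfl⟩
  have key : ∀ J : Fin d, J ≤ ihat → ∀ t : ℝ, (∀ i : Fin d, i ≤ ihat → q i * g i ≤ t) →
      (∑ i, q i * F i) ≤ F J + t * ∑ i ∈ univ.filter (· < J), (F i - F J) / g i := by
    intro J hJ t ht
    have h1 : (∑ i, q i * F i) = F J + ∑ i, q i * (F i - F J) := by
      have e : ∑ i, q i * (F i - F J) = (∑ i, q i * F i) - (∑ i, q i) * F J := by
        rw [Finset.sum_mul, ← Finset.sum_sub_distrib]
        exact Finset.sum_congr rfl (fun i _ => by ring)
      rw [e, hq1]; ring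
    rw [h1]
    have h2 : ∑ i, q i * (F i - F J) ≤ ∑ i, (if i < J then t * ((F i - F J) / g i) else 0) := by
      apply Finset.sum_le_sum
      intro i _
      by_cases hij : i < J
      · simp only [if_pos hij]
        have hiI : i ≤ ihat := le_trans hij.le hJ
        have hgi := hgpos i hiI
        have hqi : q i ≤ t / g i := (le_div_iff₀ hgi).mpr (ht i hiI)
        have hFij : 0 ≤ F i - F J := sub_nonneg.mpr (hFmono i J hij.le)
        calc q i * (F i - F J) ≤ t / g i * (F i - F J) :=
              mul_le_mul_of_nonneg_right hqi hFij
          _ = t * ((F i - F J) / g i) := by ring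
      · simp only [if_neg hij]
        exact mul_nonpos_of_nonneg_of_nonpos (hq0 i)
          (sub_nonpos.mpr (hFmono J i (not_lt.mp hij)))
    have h3 : ∑ i, (if i < J then t * ((F i - F J) / g i) else 0)
        = t * ∑ i ∈ univ.filter (· < J), (F i - F J) / g i := by
      rw [Finset.mul_sum, Finset.sum_filter]
    linarith
  have hnotmem : Ihat ∉ univ.filter (· < Ihat) := by simp
  have hfilI : univ.filter (fun i => i ≤ Ihat) = insert Ihat (univ.filter (· < Ihat)) := by
    ext i
    simp only [mem_filter, mem_univ, true_and, mem_insert]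
    constructor
    · intro h; rcases lt_or_eq_of_le h with h | h
      · exact Or.inr h
      · exact Or.inl h
    · rintro (rfl | h)
      · exact le_refl _
      · exact h.le
  have hsplit : ∀ h : Fin d → ℝ, ∑ i ∈ univ.filter (· ≤ Ihat), h i
      = h Ihat + ∑ i ∈ univ.filter (· < Ihat), h i := by
    intro h
    show ∑ i ∈ univ.filter (fun i => i ≤ Ihat), h i = _
    rw [hfilI, Finset.sum_insert hnotmem]
  have hSI' : ∑ i ∈ univ.filter (· ≤ Ihat), (F i - F Ihat) / g i
      = ∑ i ∈ univ.filter (· < Ihat), (F i - F Ihat) / g i := by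
    rw [hsplit]; simp
  have hqtF : ∑ i, qt i * F i
      = F Ihat + (∑ i ∈ univ.filter (· < Ihat), (F i - F Ihat) / g i) / Z := by
    have e1 : ∑ i, qt i * F i
        = ∑ i ∈ univ.filter (· ≤ Ihat), (1 / g i) / Z * F i := by
      rw [Finset.sum_filter]
      apply Finset.sum_congr rfl
      intro i _
      rw [hqt i]
      by_cases h : i ≤ Ihat <;> simp [h]
    have e2 : ∀ i ∈ univ.filter (· ≤ Ihat),
        (1 / g i) / Z * F i = (F i - F Ihat) / g i * (1 / Z) + F Ihat * (1 / g i) * (1 / Z) := by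
      intro i hi
      have hgi : g i ≠ 0 :=
        (hgpos i (le_trans (by simpa using hi) hIhat_le)).ne'
      field_simp
      ring
    rw [e1, Finset.sum_congr rfl e2, Finset.sum_add_distrib, ← Finset.sum_mul, hSI']
    have e3 : ∑ i ∈ univ.filter (· ≤ Ihat), F Ihat * (1 / g i) * (1 / Z)
        = F Ihat * Z * (1 / Z) := by
      rw [← Finset.sum_mul, ← Finset.mul_sum]
    rw [e3]
    field_simp
    ring
  have hqt_sup : sSup {x : ℝ | ∃ i : Fin d, i ≤ ihat ∧ x = qt i * g i} = 1 / Z := by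
    apply le_antisymm
    · refine csSup_le ⟨qt ihat * g ihat, ihat, le_refl _, rfl⟩ ?_
      rintro x ⟨i, hi, rfl⟩
      rw [hqt i]
      by_cases h : i ≤ Ihat
      · rw [if_pos h]
        have hgi : g i ≠ 0 := (hgpos i hi).ne'
        have : 1 / g i / Z * g i = 1 / Z := by field_simp
        rw [this]
      · rw [if_neg h, zero_mul]
        exact le_of_lt (one_div_pos.mpr hZpos)
    · apply le_csSup (hbdd qt)
      refine ⟨Ihat, hIhat_le, ?_⟩
      rw [hqt Ihat, if_pos (le_refl _)]
      have hgI : g Ihat ≠ 0 := (hgpos Ihat hIhat_le).ne'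
      field_simp
  set t : ℝ := sSup {x : ℝ | ∃ i : Fin d, i ≤ ihat ∧ x = q i * g i} with htdef
  have ht : ∀ i : Fin d, i ≤ ihat → q i * g i ≤ t :=
    fun i hi => le_csSup (hbdd q) ⟨i, hi, rfl⟩
  rw [hqt_sup, hqtF]
  by_cases hcase : 1 / Z ≤ t
  · have h := key Ihat hIhat_le t ht
    have hmul : t * ((∑ i ∈ univ.filter (· < Ihat), (F i - F Ihat) / g i) - 1)
        ≤ (1 / Z) * ((∑ i ∈ univ.filter (· < Ihat), (F i - F Ihat) / g i) - 1) :=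
      mul_le_mul_of_nonpos_right hcase (by linarith)
    have e : (1 / Z) * ((∑ i ∈ univ.filter (· < Ihat), (F i - F Ihat) / g i) - 1)
        = (∑ i ∈ univ.filter (· < Ihat), (F i - F Ihat) / g i) / Z - 1 / Z := by ring
    linarith
  · push_neg at hcase
    by_cases hII : Ihat = ihat
    · exfalso
      subst hII
      have h1 : (1 : ℝ) = ∑ i ∈ univ.filter (· ≤ Ihat), q i := by
        rw [← hq1, Finset.sum_filter]
        apply Finset.sum_congr rfl
        intro i _
        by_cases h : i ≤ Ihat
        · simp [h]
        · simp [h, hsupp i (not_le.mp h)]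
      have h2 : ∑ i ∈ univ.filter (· ≤ Ihat), q i
          ≤ ∑ i ∈ univ.filter (· ≤ Ihat), t * (1 / g i) := by
        apply Finset.sum_le_sum
        intro i hi
        have hi' : i ≤ Ihat := by simpa using hi
        have hgi := hgpos i hi'
        rw [mul_one_div]
        exact (le_div_iff₀ hgi).mpr (ht i hi')
      have h3 : ∑ i ∈ univ.filter (· ≤ Ihat), t * (1 / g i) = t * Z := by
        rw [← Finset.mul_sum]
      have h4 : 1 / Z ≤ t := by
        rw [div_le_iff₀ hZpos]; linarith
      linarith
    · have hlt : Ihat < ihat := lt_of_le_of_ne hIhat_le hII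
      have hJlt : Ihat.val + 1 < d := by
        have h1 := Fin.lt_def.mp hlt
        have h2 := ihat.isLt
        omega
      set J : Fin d := ⟨Ihat.val + 1, hJlt⟩ with hJdef
      have hJle : J ≤ ihat := by
        rw [Fin.le_def]
        have := Fin.lt_def.mp hlt
        exact this
      have hIJ : ¬ (J ≤ Ihat) := by rw [Fin.le_def]; show ¬ (Ihat.val + 1 ≤ Ihat.val); omega
      have hSJ : 1 < ∑ i ∈ univ.filter (· < J), (F i - F J) / g i := by
        by_contra h
        push_neg at h
        exact hIJ (hSmax J hJle h)
      have hfilJ : univ.filter (· < J) = univ.filter (· ≤ Ihat) := by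
        ext i
        simp only [mem_filter, mem_univ, true_and, Fin.lt_def, Fin.le_def, hJdef, Fin.val_mk]
        omega
      have hSJeq : ∑ i ∈ univ.filter (· < J), (F i - F J) / g i
          = (∑ i ∈ univ.filter (· < Ihat), (F i - F Ihat) / g i) + (F Ihat - F J) * Z := by
        rw [hfilJ]
        have e : ∀ i ∈ univ.filter (· ≤ Ihat),
            (F i - F J) / g i = (F i - F Ihat) / g i + (F Ihat - F J) * (1 / g i) := by
          intro i hi
          have hgi : g i ≠ 0 :=
            (hgpos i (le_trans (by simpa using hi) hIhat_le)).ne'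
          field_simp
          ring
        rw [Finset.sum_congr rfl e, Finset.sum_add_distrib, ← Finset.mul_sum, hSI']
      have h := key J hJle t ht
      have hmul : t * ((∑ i ∈ univ.filter (· < J), (F i - F J) / g i) - 1)
          ≤ (1 / Z) * ((∑ i ∈ univ.filter (· < J), (F i - F J) / g i) - 1) :=
        mul_le_mul_of_nonneg_right hcase.le (by linarith)
      have heq : F J + (1 / Z) * ((∑ i ∈ univ.filter (· < J), (F i - F J) / g i) - 1)
          = F Ihat + (∑ i ∈ univ.filter (· < Ihat), (F i - F Ihat) / g i) / Z - 1 / Z := by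
        rw [hSJeq]
        field_simp
        ring
      linarith

/-- over strategies supported in `{1,…,î}`, the truncated strategy `q̃`
(proportional to `1/g⁻(p̂_i)` up to `Î`) solves the reduced regularized problem. -/
theorem stmt15 {d : ℕ} (hd : 0 < d) (f : ℝ → ℝ)
    (hmono : MonotoneOn f (Set.Ioi 0))
    (hconc : ConcaveOn ℝ (Set.Ioi 0) f)
    (phat : Fin d → ℝ)
    (hmem : phat ∈ simplex d)
    (hpos : ∀ i, 0 < phat i)
    (hsort : ∀ i j : Fin d, i ≤ j → phat j ≤ phat i)
    (ε : ℝ)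
    (heps_lo : phat ⟨d - 1, by omega⟩ ≤ ε)
    (heps_hi : ε < phat ⟨0, hd⟩)
    (ihat : Fin d)
    (hihat1 : ε < phat ihat)
    (hihat2 : ∀ i : Fin d, ε < phat i → i ≤ ihat)
    (hgap : ∀ i : Fin d, i ≤ ihat → 0 < f (phat i) - f (phat i - ε))
    (Ihat : Fin d)
    (hIhat_le : Ihat ≤ ihat)
    (hIhat_cond : (∑ i ∈ univ.filter (· < Ihat),
        (f (phat i) - f (phat Ihat)) / (f (phat i) - f (phat i - ε))) ≤ 1)
    (hIhat_max : ∀ I : Fin d, I ≤ ihat →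
        (∑ i ∈ univ.filter (· < I),
          (f (phat i) - f (phat I)) / (f (phat i) - f (phat i - ε))) ≤ 1 →
        I ≤ Ihat)
    (qt : Fin d → ℝ)
    (hqt : ∀ i : Fin d,
        qt i = if i ≤ Ihat then
            (1 / (f (phat i) - f (phat i - ε)))
              / ∑ k ∈ univ.filter (· ≤ Ihat), 1 / (f (phat k) - f (phat k - ε))
          else 0) :
    ∀ q ∈ simplex d, (∀ i : Fin d, ihat < i → q i = 0) →
      (∑ i, q i * f (phat i))
          - sSup {x : ℝ | ∃ i : Fin d, i ≤ ihat ∧ x = q i * (f (phat i) - f (phat i - ε))}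
        ≤ (∑ i, qt i * f (phat i))
            - sSup {x : ℝ | ∃ i : Fin d, i ≤ ihat ∧
                x = qt i * (f (phat i) - f (phat i - ε))} := by
  intro q hq hsupp
  exact aux15 (fun i => f (phat i)) (fun i => f (phat i) - f (phat i - ε)) ihat Ihat
    hIhat_le hgap
    (fun i j hij => hmono (Set.mem_Ioi.mpr (hpos j)) (Set.mem_Ioi.mpr (hpos i)) (hsort i j hij))
    hIhat_cond hIhat_max qt hqt q hq.1 hq.2 hsupp
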